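/- The Wigner Hamiltonian H_w is symmetric on Schwartz functions: for Schwartz f, g on ℝ², ∬ conj(g) H_w f = ∬ conj(H_w g) f, where H_w f = ½(-(1/4)∂²_x f + p² f + V_eig(x,·) *_p f) with V real-valued. -/

import Mathlib

open MeasureTheory Complex SchwartzMap Real
open scoped FourierTransform

noncomputable section

namespace WignerAux

lemma htg_affine {F : Type*} [NormedAddCommGroup F] [NormedSpace ℝ F]
    (A : ℝ →L[ℝ] F) (c : F) : Function.HasTemperateGrowth (fun t : ℝ => A t + c) := by
  apply Function.HasTemperateGrowth.of_fderiv (k := 1) (C := ‖A‖ + ‖c‖)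
  · have h : (fderiv ℝ (fun t : ℝ => A t + c)) = fun _ => A := by
      funext t
      rw [fderiv_add_const]
      exact A.fderiv
    rw [h]
    exact .const A
  · exact (A.differentiable.add_const c)
  · intro t
    have h1 : ‖A t + c‖ ≤ ‖A‖ * ‖t‖ + ‖c‖ := le_trans (norm_add_le _ _) (by gcongr; exact A.le_opNorm t)
    have h2 : (0:ℝ) ≤ ‖A‖ := norm_nonneg _
    have h3 : (0:ℝ) ≤ ‖c‖ := norm_nonneg _
    have h4 : (0:ℝ) ≤ ‖t‖ := norm_nonneg _
    calc ‖A t + c‖ ≤ ‖A‖ * ‖t‖ + ‖c‖ := h1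
      _ ≤ (‖A‖ + ‖c‖) * (1 + ‖t‖) ^ 1 := by nlinarith

lemma htg_slice1 (p : ℝ) : Function.HasTemperateGrowth (fun t : ℝ => ((t, p) : ℝ × ℝ)) := by
  have h : (fun t : ℝ => ((t, p) : ℝ × ℝ))
      = fun t : ℝ => (ContinuousLinearMap.inl ℝ ℝ ℝ) t + ((0 : ℝ), p) := by
    funext t; simp [Prod.ext_iff]
  rw [h]; exact htg_affine _ _

lemma htg_slice2 (x : ℝ) : Function.HasTemperateGrowth (fun q : ℝ => ((x, q) : ℝ × ℝ)) := by
  have h : (fun q : ℝ => ((x, q) : ℝ × ℝ))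
      = fun q : ℝ => (ContinuousLinearMap.inr ℝ ℝ ℝ) q + (x, (0 : ℝ)) := by
    funext q; simp [Prod.ext_iff]
  rw [h]; exact htg_affine _ _

/-- restriction of a Schwartz function on ℝ² to a horizontal line (x variable), as a CLM -/
def sliceP (p : ℝ) : 𝓢(ℝ × ℝ, ℂ) →L[ℝ] 𝓢(ℝ, ℂ) :=
  SchwartzMap.compCLM ℝ (htg_slice1 p)
    ⟨1, 1, fun t => by
      have : ‖t‖ ≤ ‖((t, p) : ℝ × ℝ)‖ := norm_fst_le ((t, p) : ℝ × ℝ)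
      have h2 : (0:ℝ) ≤ ‖((t, p) : ℝ × ℝ)‖ := norm_nonneg _
      calc ‖t‖ ≤ ‖((t, p) : ℝ × ℝ)‖ := this
        _ ≤ 1 * (1 + ‖((t, p) : ℝ × ℝ)‖) ^ 1 := by nlinarith⟩

@[simp] lemma sliceP_apply (p : ℝ) (h : 𝓢(ℝ × ℝ, ℂ)) (t : ℝ) : sliceP p h t = h (t, p) := rfl

/-- restriction to a vertical line (p variable) -/
def sliceX (x : ℝ) : 𝓢(ℝ × ℝ, ℂ) →L[ℝ] 𝓢(ℝ, ℂ) :=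
  SchwartzMap.compCLM ℝ (htg_slice2 x)
    ⟨1, 1, fun q => by
      have : ‖q‖ ≤ ‖((x, q) : ℝ × ℝ)‖ := norm_snd_le ((x, q) : ℝ × ℝ)
      have h2 : (0:ℝ) ≤ ‖((x, q) : ℝ × ℝ)‖ := norm_nonneg _
      calc ‖q‖ ≤ ‖((x, q) : ℝ × ℝ)‖ := this
        _ ≤ 1 * (1 + ‖((x, q) : ℝ × ℝ)‖) ^ 1 := by nlinarith⟩

@[simp] lemma sliceX_apply (x : ℝ) (h : 𝓢(ℝ × ℝ, ℂ)) (q : ℝ) : sliceX x h q = h (x, q) := rfl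

lemma schwartz_bound {E : Type*} [NormedAddCommGroup E] [NormedSpace ℝ E]
    (f : 𝓢(E, ℂ)) : ∃ C : ℝ, 0 ≤ C ∧ ∀ z, ‖f z‖ ≤ C := by
  obtain ⟨C, hC⟩ := f.decay 0 0
  refine ⟨C, le_of_lt hC.1, fun z => ?_⟩
  have := hC.2 z
  simpa using this

end WignerAux

namespace WignerAux2

lemma slice_deriv (h : 𝓢(ℝ × ℝ, ℂ)) (p : ℝ) :
    deriv (fun t => h (t, p)) = fun x => (LineDeriv.lineDerivOpCLM ℝ 𝓢(ℝ × ℝ, ℂ) ((1:ℝ), (0:ℝ)) h) (x, p) := by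
  funext x
  have hL : HasDerivAt (fun t : ℝ => ((t, p) : ℝ × ℝ)) ((1:ℝ), (0:ℝ)) x :=
    (hasDerivAt_id x).prodMk (hasDerivAt_const x p)
  have hd := (h.differentiable.differentiableAt.hasFDerivAt.comp_hasDerivAt x hL)
  have := hd.deriv
  simpa [Function.comp_def, LineDeriv.lineDerivOpCLM_apply, SchwartzMap.lineDerivOp_apply_eq_fderiv] using this

lemma slice_iter2 (h : 𝓢(ℝ × ℝ, ℂ)) (x p : ℝ) :
    iteratedDeriv 2 (fun t => h (t, p)) x
      = (LineDeriv.lineDerivOpCLM ℝ 𝓢(ℝ × ℝ, ℂ) ((1:ℝ), (0:ℝ)) (LineDeriv.lineDerivOpCLM ℝ 𝓢(ℝ × ℝ, ℂ) ((1:ℝ), (0:ℝ)) h)) (x, p) := by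
  have h2 : iteratedDeriv 2 (fun t => h (t, p)) = deriv (deriv (fun t => h (t, p))) := by
    rw [show (2:ℕ) = 1 + 1 from rfl, iteratedDeriv_succ, iteratedDeriv_one]
  rw [h2, slice_deriv h p, slice_deriv (LineDeriv.lineDerivOpCLM ℝ 𝓢(ℝ × ℝ, ℂ) ((1:ℝ), (0:ℝ)) h) p]

lemma parts (φ ψ : 𝓢(ℝ, ℂ)) :
    ∫ t : ℝ, (starRingEnd ℂ) (ψ t) * deriv (⇑φ) t
      = - ∫ t : ℝ, (starRingEnd ℂ) (deriv (⇑ψ) t) * φ t := by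
  obtain ⟨Cψ, hCψ0, hCψ⟩ : ∃ C : ℝ, 0 ≤ C ∧ ∀ z, ‖ψ z‖ ≤ C := by
    obtain ⟨C, hC⟩ := ψ.decay 0 0
    exact ⟨C, le_of_lt hC.1, fun z => by simpa using hC.2 z⟩
  obtain ⟨Cψ', hCψ0', hCψ'⟩ : ∃ C : ℝ, 0 ≤ C ∧ ∀ z, ‖deriv (⇑ψ) z‖ ≤ C := by
    obtain ⟨C, hC⟩ := (SchwartzMap.derivCLM ℝ ℂ ψ).decay 0 0
    exact ⟨C, le_of_lt hC.1, fun z => by simpa using hC.2 z⟩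
  have hψd : ∀ t, HasDerivAt (fun s => (starRingEnd ℂ) (ψ s)) ((starRingEnd ℂ) (deriv (⇑ψ) t)) t :=
    fun t => (ψ.differentiable.differentiableAt.hasDerivAt).star
  have hφd : ∀ t, HasDerivAt (⇑φ) (deriv (⇑φ) t) t :=
    fun t => φ.differentiable.differentiableAt.hasDerivAt
  have hφ'int : Integrable (deriv (⇑φ)) volume := (SchwartzMap.derivCLM ℝ ℂ φ).integrable
  have hφint : Integrable (⇑φ) volume := φ.integrable
  have hmψ : AEStronglyMeasurable (fun t => (starRingEnd ℂ) (ψ t)) (volume : Measure ℝ) :=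
    (Complex.continuous_conj.comp ψ.continuous).aestronglyMeasurable
  have hmψ' : AEStronglyMeasurable (fun t => (starRingEnd ℂ) (deriv (⇑ψ) t)) (volume : Measure ℝ) :=
    (Complex.continuous_conj.comp (SchwartzMap.derivCLM ℝ ℂ ψ).continuous).aestronglyMeasurable
  have h1 : Integrable ((fun t => (starRingEnd ℂ) (ψ t)) * deriv (⇑φ)) volume :=
    hφ'int.bdd_mul hmψ (Filter.Eventually.of_forall fun t => by simpa using hCψ t)
  have h2 : Integrable ((fun t => (starRingEnd ℂ) (deriv (⇑ψ) t)) * ⇑φ) volume :=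
    hφint.bdd_mul hmψ' (Filter.Eventually.of_forall fun t => by simpa using hCψ' t)
  have h3 : Integrable ((fun t => (starRingEnd ℂ) (ψ t)) * ⇑φ) volume :=
    hφint.bdd_mul hmψ (Filter.Eventually.of_forall fun t => by simpa using hCψ t)
  exact integral_mul_deriv_eq_deriv_mul_of_integrable (fun t _ => hψd t) (fun t _ => hφd t) h1 h2 h3

lemma parts2 (φ ψ : 𝓢(ℝ, ℂ)) :
    ∫ t : ℝ, (starRingEnd ℂ) (ψ t) * iteratedDeriv 2 (⇑φ) t
      = ∫ t : ℝ, (starRingEnd ℂ) (iteratedDeriv 2 (⇑ψ) t) * φ t := by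
  have h2 : ∀ χ : 𝓢(ℝ, ℂ), iteratedDeriv 2 (⇑χ) = deriv (⇑(SchwartzMap.derivCLM ℝ ℂ χ)) := by
    intro χ
    rw [show (2:ℕ) = 1 + 1 from rfl, iteratedDeriv_succ, iteratedDeriv_one]
    rfl
  rw [h2 φ, h2 ψ]
  rw [parts (SchwartzMap.derivCLM ℝ ℂ φ) ψ]
  have hx : ∫ t : ℝ, (starRingEnd ℂ) ((SchwartzMap.derivCLM ℝ ℂ ψ) t) * deriv (⇑φ) t
      = - ∫ t : ℝ, (starRingEnd ℂ) (deriv (⇑(SchwartzMap.derivCLM ℝ ℂ ψ)) t) * φ t :=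
    parts φ (SchwartzMap.derivCLM ℝ ℂ ψ)
  rw [show (∫ t : ℝ, (starRingEnd ℂ) (deriv (⇑ψ) t) * (SchwartzMap.derivCLM ℝ ℂ φ) t)
      = ∫ t : ℝ, (starRingEnd ℂ) ((SchwartzMap.derivCLM ℝ ℂ ψ) t) * deriv (⇑φ) t from rfl, hx, neg_neg]

end WignerAux2

namespace WignerAux3

lemma schwartz_bound' (f : 𝓢(ℝ × ℝ, ℂ)) : ∃ C : ℝ, 0 ≤ C ∧ ∀ z, ‖f z‖ ≤ C := by
  obtain ⟨C, hC⟩ := f.decay 0 0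
  exact ⟨C, le_of_lt hC.1, fun z => by simpa using hC.2 z⟩

/-- joint integrability of conj(g) * h for Schwartz g h on ℝ² -/
lemma joint_int (g h : 𝓢(ℝ × ℝ, ℂ)) :
    Integrable (fun z : ℝ × ℝ => (starRingEnd ℂ) (g z) * h z)
      ((volume : Measure ℝ).prod (volume : Measure ℝ)) := by
  rw [← MeasureTheory.Measure.volume_eq_prod]
  obtain ⟨C, hC0, hC⟩ := schwartz_bound' g
  exact h.integrable.bdd_mul
    ((Complex.continuous_conj.comp g.continuous).aestronglyMeasurable)
    (Filter.Eventually.of_forall fun z => by simpa using hC z)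

lemma kinetic (f g : 𝓢(ℝ × ℝ, ℂ)) :
    (∫ x : ℝ, ∫ p : ℝ, (starRingEnd ℂ) (g (x, p))
        * (LineDeriv.lineDerivOpCLM ℝ 𝓢(ℝ × ℝ, ℂ) ((1:ℝ), (0:ℝ)) (LineDeriv.lineDerivOpCLM ℝ 𝓢(ℝ × ℝ, ℂ) ((1:ℝ), (0:ℝ)) f)) (x, p))
      = ∫ x : ℝ, ∫ p : ℝ, (starRingEnd ℂ)
          ((LineDeriv.lineDerivOpCLM ℝ 𝓢(ℝ × ℝ, ℂ) ((1:ℝ), (0:ℝ)) (LineDeriv.lineDerivOpCLM ℝ 𝓢(ℝ × ℝ, ℂ) ((1:ℝ), (0:ℝ)) g)) (x, p)) * f (x, p) := by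
  set Df := LineDeriv.lineDerivOpCLM ℝ 𝓢(ℝ × ℝ, ℂ) ((1:ℝ), (0:ℝ)) (LineDeriv.lineDerivOpCLM ℝ 𝓢(ℝ × ℝ, ℂ) ((1:ℝ), (0:ℝ)) f) with hDf
  set Dg := LineDeriv.lineDerivOpCLM ℝ 𝓢(ℝ × ℝ, ℂ) ((1:ℝ), (0:ℝ)) (LineDeriv.lineDerivOpCLM ℝ 𝓢(ℝ × ℝ, ℂ) ((1:ℝ), (0:ℝ)) g) with hDg
  have hswap1 : (∫ x : ℝ, ∫ p : ℝ, (starRingEnd ℂ) (g (x, p)) * Df (x, p))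
      = ∫ p : ℝ, ∫ x : ℝ, (starRingEnd ℂ) (g (x, p)) * Df (x, p) :=
    integral_integral_swap (joint_int g Df)
  have hswap2 : (∫ x : ℝ, ∫ p : ℝ, (starRingEnd ℂ) (Dg (x, p)) * f (x, p))
      = ∫ p : ℝ, ∫ x : ℝ, (starRingEnd ℂ) (Dg (x, p)) * f (x, p) := by
    have : Integrable (fun z : ℝ × ℝ => (starRingEnd ℂ) (Dg z) * f z)
        ((volume : Measure ℝ).prod (volume : Measure ℝ)) := by
      rw [← MeasureTheory.Measure.volume_eq_prod]
      obtain ⟨C, hC0, hC⟩ := schwartz_bound' Dg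
      exact f.integrable.bdd_mul
        ((Complex.continuous_conj.comp Dg.continuous).aestronglyMeasurable)
        (Filter.Eventually.of_forall fun z => by simpa using hC z)
    exact integral_integral_swap this
  rw [hswap1, hswap2]
  refine integral_congr_ae (Filter.Eventually.of_forall fun p => ?_)
  have e1 : ∀ x : ℝ, Df (x, p) = iteratedDeriv 2 (⇑(WignerAux.sliceP p f)) x := by
    intro x
    rw [show (⇑(WignerAux.sliceP p f)) = fun t => f (t, p) from rfl]
    rw [WignerAux2.slice_iter2 f x p]
  have e2 : ∀ x : ℝ, Dg (x, p) = iteratedDeriv 2 (⇑(WignerAux.sliceP p g)) x := by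
    intro x
    rw [show (⇑(WignerAux.sliceP p g)) = fun t => g (t, p) from rfl]
    rw [WignerAux2.slice_iter2 g x p]
  calc ∫ x : ℝ, (starRingEnd ℂ) (g (x, p)) * Df (x, p)
      = ∫ x : ℝ, (starRingEnd ℂ) ((WignerAux.sliceP p g) x)
          * iteratedDeriv 2 (⇑(WignerAux.sliceP p f)) x := by
        refine integral_congr_ae (Filter.Eventually.of_forall fun x => ?_)
        show (starRingEnd ℂ) (g (x, p)) * Df (x, p)
            = (starRingEnd ℂ) (((WignerAux.sliceP p) g) x)
              * iteratedDeriv 2 (⇑((WignerAux.sliceP p) f)) x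
        rw [e1 x]; rfl
    _ = ∫ x : ℝ, (starRingEnd ℂ) (iteratedDeriv 2 (⇑(WignerAux.sliceP p g)) x)
          * (WignerAux.sliceP p f) x := WignerAux2.parts2 _ _
    _ = ∫ x : ℝ, (starRingEnd ℂ) (Dg (x, p)) * f (x, p) := by
        refine integral_congr_ae (Filter.Eventually.of_forall fun x => ?_)
        show (starRingEnd ℂ) (iteratedDeriv 2 (⇑((WignerAux.sliceP p) g)) x)
              * ((WignerAux.sliceP p) f) x = (starRingEnd ℂ) (Dg (x, p)) * f (x, p)
        rw [e2 x]; rfl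

end WignerAux3

namespace WignerAux4

lemma htg_affine {F : Type*} [NormedAddCommGroup F] [NormedSpace ℝ F]
    (A : ℝ →L[ℝ] F) (c : F) : Function.HasTemperateGrowth (fun t : ℝ => A t + c) := by
  apply Function.HasTemperateGrowth.of_fderiv (k := 1) (C := ‖A‖ + ‖c‖)
  · have h : (fderiv ℝ (fun t : ℝ => A t + c)) = fun _ => A := by
      funext t; rw [fderiv_add_const]; exact A.fderiv
    rw [h]; exact .const A
  · exact (A.differentiable.add_const c)
  · intro t
    have h1 : ‖A t + c‖ ≤ ‖A‖ * ‖t‖ + ‖c‖ :=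
      le_trans (norm_add_le _ _) (by gcongr; exact A.le_opNorm t)
    have h2 : (0:ℝ) ≤ ‖A‖ := norm_nonneg _
    have h3 : (0:ℝ) ≤ ‖c‖ := norm_nonneg _
    have h4 : (0:ℝ) ≤ ‖t‖ := norm_nonneg _
    calc ‖A t + c‖ ≤ ‖A‖ * ‖t‖ + ‖c‖ := h1
      _ ≤ (‖A‖ + ‖c‖) * (1 + ‖t‖) ^ 1 := by nlinarith

lemma htg1 (x : ℝ) : Function.HasTemperateGrowth (fun y : ℝ => x + y / 2) := by
  have h : (fun y : ℝ => x + y / 2)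
      = fun y : ℝ => ((1/2 : ℝ) • ContinuousLinearMap.id ℝ ℝ) y + x := by
    funext y; simp [smul_eq_mul]; ring
  rw [h]; exact htg_affine _ _

lemma htg2 (x : ℝ) : Function.HasTemperateGrowth (fun y : ℝ => x - y / 2) := by
  have h : (fun y : ℝ => x - y / 2)
      = fun y : ℝ => ((-(1/2) : ℝ) • ContinuousLinearMap.id ℝ ℝ) y + x := by
    funext y; simp [smul_eq_mul]; ring
  rw [h]; exact htg_affine _ _

lemma upper1 (x : ℝ) : ∃ (k : ℕ) (C : ℝ), ∀ y : ℝ, ‖y‖ ≤ C * (1 + ‖x + y / 2‖) ^ k := by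
  refine ⟨1, 2 + 2 * ‖x‖, fun y => ?_⟩
  have h1 : ‖y‖ ≤ 2 * ‖x + y/2‖ + 2 * ‖x‖ := by
    have he : y = 2 * (x + y/2) - 2 * x := by ring
    calc ‖y‖ = ‖2 * (x + y/2) - 2 * x‖ := by rw [← he]
      _ ≤ ‖2 * (x + y/2)‖ + ‖2 * x‖ := norm_sub_le _ _
      _ = 2 * ‖x + y/2‖ + 2 * ‖x‖ := by
          simp [Real.norm_eq_abs, abs_mul]
  have h2 : (0:ℝ) ≤ ‖x‖ := norm_nonneg x
  have h3 : (0:ℝ) ≤ ‖x + y/2‖ := norm_nonneg _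
  calc ‖y‖ ≤ 2 * ‖x + y/2‖ + 2 * ‖x‖ := h1
    _ ≤ (2 + 2 * ‖x‖) * (1 + ‖x + y/2‖) ^ 1 := by nlinarith

lemma upper2 (x : ℝ) : ∃ (k : ℕ) (C : ℝ), ∀ y : ℝ, ‖y‖ ≤ C * (1 + ‖x - y / 2‖) ^ k := by
  refine ⟨1, 2 + 2 * ‖x‖, fun y => ?_⟩
  have h1 : ‖y‖ ≤ 2 * ‖x - y/2‖ + 2 * ‖x‖ := by
    have he : y = 2 * x - 2 * (x - y/2) := by ring
    calc ‖y‖ = ‖2 * x - 2 * (x - y/2)‖ := by rw [← he]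
      _ ≤ ‖2 * x‖ + ‖2 * (x - y/2)‖ := norm_sub_le _ _
      _ = 2 * ‖x - y/2‖ + 2 * ‖x‖ := by
          simp [Real.norm_eq_abs, abs_mul]; ring
  have h2 : (0:ℝ) ≤ ‖x‖ := norm_nonneg x
  have h3 : (0:ℝ) ≤ ‖x - y/2‖ := norm_nonneg _
  calc ‖y‖ ≤ 2 * ‖x - y/2‖ + 2 * ‖x‖ := h1
    _ ≤ (2 + 2 * ‖x‖) * (1 + ‖x - y/2‖) ^ 1 := by nlinarith

/-- real-valued Schwartz function y ↦ V (x + y/2) + V (x - y/2) -/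
def Wr (V : 𝓢(ℝ, ℝ)) (x : ℝ) : 𝓢(ℝ, ℝ) :=
  SchwartzMap.compCLM ℝ (htg1 x) (upper1 x) V + SchwartzMap.compCLM ℝ (htg2 x) (upper2 x) V

/-- complexification -/
def W (V : 𝓢(ℝ, ℝ)) (x : ℝ) : 𝓢(ℝ, ℂ) :=
  SchwartzMap.bilinLeftCLM (ContinuousLinearMap.lsmul ℝ ℝ : ℝ →L[ℝ] ℂ →L[ℝ] ℂ)
    (Function.HasTemperateGrowth.const (1 : ℂ)) (Wr V x)

@[simp] lemma W_apply (V : 𝓢(ℝ, ℝ)) (x y : ℝ) :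
    W V x y = ((V (x + y / 2) + V (x - y / 2) : ℝ) : ℂ) := by
  show (Wr V x y : ℝ) • (1 : ℂ) = _
  rw [Complex.real_smul, mul_one]
  rfl

lemma flip_core (V : 𝓢(ℝ, ℝ)) (x p : ℝ) :
    (∫ y : ℝ, ((V (x + y / 2) + V (x - y / 2) : ℝ) : ℂ) * Complex.exp (Complex.I * p * y))
      = ∫ y : ℝ, ((V (x + y / 2) + V (x - y / 2) : ℝ) : ℂ) * Complex.exp (-(Complex.I * p * y)) := by
  have h : ∀ y : ℝ, ((V (x + y / 2) + V (x - y / 2) : ℝ) : ℂ) * Complex.exp (Complex.I * p * y)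
      = (fun y : ℝ => ((V (x + y / 2) + V (x - y / 2) : ℝ) : ℂ)
          * Complex.exp (-(Complex.I * p * y))) (-y) := by
    intro y
    simp only
    rw [show x + (-y) / 2 = x - y / 2 by ring, show x - (-y) / 2 = x + y / 2 by ring,
      show (-(Complex.I * p * ((-y : ℝ) : ℂ))) = Complex.I * p * (y : ℂ) by push_cast; ring,
      add_comm (V (x - y / 2)) (V (x + y / 2))]
  calc (∫ y : ℝ, ((V (x + y / 2) + V (x - y / 2) : ℝ) : ℂ) * Complex.exp (Complex.I * p * y))
      = ∫ y : ℝ, (fun y : ℝ => ((V (x + y / 2) + V (x - y / 2) : ℝ) : ℂ)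
          * Complex.exp (-(Complex.I * p * y))) (-y) :=
        integral_congr_ae (Filter.Eventually.of_forall h)
    _ = _ := by
        simpa using integral_neg_eq_self (fun y : ℝ =>
          ((V (x + y / 2) + V (x - y / 2) : ℝ) : ℂ) * Complex.exp (-(Complex.I * p * y))) volume

lemma veig_conj (V : 𝓢(ℝ, ℝ)) (Veig : ℝ → ℝ → ℂ)
    (hVeig : ∀ x p, Veig x p = (1 / (2 * Real.pi)) *
      ∫ y : ℝ, ((V (x + y / 2) + V (x - y / 2) : ℝ) : ℂ) * Complex.exp (-(Complex.I * p * y)))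
    (x p : ℝ) : (starRingEnd ℂ) (Veig x p) = Veig x p := by
  rw [hVeig x p, map_mul]
  have hc : (starRingEnd ℂ) (1 / (2 * (Real.pi : ℂ))) = 1 / (2 * (Real.pi : ℂ)) := by
    rw [map_div₀, map_one, map_mul, Complex.conj_ofReal, map_ofNat]
  rw [hc]
  congr 1
  rw [← integral_conj]
  have h : ∀ y : ℝ, (starRingEnd ℂ)
      (((V (x + y / 2) + V (x - y / 2) : ℝ) : ℂ) * Complex.exp (-(Complex.I * p * y)))
      = ((V (x + y / 2) + V (x - y / 2) : ℝ) : ℂ) * Complex.exp (Complex.I * p * y) := by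
    intro y
    rw [map_mul, Complex.conj_ofReal, ← Complex.exp_conj]
    congr 2
    simp only [map_neg, map_mul, Complex.conj_I, Complex.conj_ofReal]
    ring
  rw [integral_congr_ae (Filter.Eventually.of_forall h)]
  exact flip_core V x p

lemma veig_even (V : 𝓢(ℝ, ℝ)) (Veig : ℝ → ℝ → ℂ)
    (hVeig : ∀ x p, Veig x p = (1 / (2 * Real.pi)) *
      ∫ y : ℝ, ((V (x + y / 2) + V (x - y / 2) : ℝ) : ℂ) * Complex.exp (-(Complex.I * p * y)))
    (x p : ℝ) : Veig x (-p) = Veig x p := by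
  rw [hVeig x (-p), hVeig x p]
  congr 1
  have h : ∀ y : ℝ, ((V (x + y / 2) + V (x - y / 2) : ℝ) : ℂ)
        * Complex.exp (-(Complex.I * ((-p : ℝ) : ℂ) * y))
      = ((V (x + y / 2) + V (x - y / 2) : ℝ) : ℂ) * Complex.exp (Complex.I * p * y) := by
    intro y
    congr 2
    push_cast
    ring
  rw [integral_congr_ae (Filter.Eventually.of_forall h)]
  exact flip_core V x p

lemma veig_rep (V : 𝓢(ℝ, ℝ)) (Veig : ℝ → ℝ → ℂ)
    (hVeig : ∀ x p, Veig x p = (1 / (2 * Real.pi)) *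
      ∫ y : ℝ, ((V (x + y / 2) + V (x - y / 2) : ℝ) : ℂ) * Complex.exp (-(Complex.I * p * y)))
    (x p : ℝ) :
    Veig x p = (1 / (2 * (Real.pi : ℂ)))
      * (SchwartzMap.fourierTransformCLM ℝ (W V x)) (p / (2 * Real.pi)) := by
  rw [hVeig x p, SchwartzMap.fourierTransformCLM_apply, SchwartzMap.fourier_coe, Real.fourier_real_eq_integral_exp_smul]
  congr 1
  refine integral_congr_ae (Filter.Eventually.of_forall fun y => ?_)
  have hπ : ((Real.pi : ℂ)) ≠ 0 := Complex.ofReal_ne_zero.2 Real.pi_ne_zero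
  have hinner : (inner ℝ y (p / (2 * Real.pi)) : ℝ) = y * (p / (2 * Real.pi)) := by
    simp [RCLike.inner_apply, conj_trivial, mul_comm]
  simp only [W_apply, smul_eq_mul, hinner]
  rw [mul_comm]
  congr 2
  push_cast
  field_simp

lemma veig_cont (V : 𝓢(ℝ, ℝ)) (Veig : ℝ → ℝ → ℂ)
    (hVeig : ∀ x p, Veig x p = (1 / (2 * Real.pi)) *
      ∫ y : ℝ, ((V (x + y / 2) + V (x - y / 2) : ℝ) : ℂ) * Complex.exp (-(Complex.I * p * y)))
    (x : ℝ) : Continuous (Veig x) := by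
  have h : Veig x = fun p => (1 / (2 * (Real.pi : ℂ)))
      * (SchwartzMap.fourierTransformCLM ℝ (W V x)) (p / (2 * Real.pi)) :=
    funext fun p => veig_rep V Veig hVeig x p
  rw [h]
  exact continuous_const.mul
    ((SchwartzMap.fourierTransformCLM ℝ (W V x)).continuous.comp
      (continuous_id.div_const _))

lemma veig_int (V : 𝓢(ℝ, ℝ)) (Veig : ℝ → ℝ → ℂ)
    (hVeig : ∀ x p, Veig x p = (1 / (2 * Real.pi)) *
      ∫ y : ℝ, ((V (x + y / 2) + V (x - y / 2) : ℝ) : ℂ) * Complex.exp (-(Complex.I * p * y)))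
    (x : ℝ) : Integrable (Veig x) (volume : Measure ℝ) := by
  have h : Veig x = fun p => (1 / (2 * (Real.pi : ℂ)))
      * (SchwartzMap.fourierTransformCLM ℝ (W V x)) (p / (2 * Real.pi)) :=
    funext fun p => veig_rep V Veig hVeig x p
  rw [h]
  have h2π : (2 * Real.pi) ≠ 0 := by positivity
  exact ((SchwartzMap.fourierTransformCLM ℝ (W V x)).integrable.comp_div h2π).const_mul _

end WignerAux4

namespace WignerAux5

lemma htg_affine {F : Type*} [NormedAddCommGroup F] [NormedSpace ℝ F]
    (A : ℝ →L[ℝ] F) (c : F) : Function.HasTemperateGrowth (fun t : ℝ => A t + c) := by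
  apply Function.HasTemperateGrowth.of_fderiv (k := 1) (C := ‖A‖ + ‖c‖)
  · have h : (fderiv ℝ (fun t : ℝ => A t + c)) = fun _ => A := by
      funext t; rw [fderiv_add_const]; exact A.fderiv
    rw [h]; exact .const A
  · exact (A.differentiable.add_const c)
  · intro t
    have h1 : ‖A t + c‖ ≤ ‖A‖ * ‖t‖ + ‖c‖ :=
      le_trans (norm_add_le _ _) (by gcongr; exact A.le_opNorm t)
    have h2 : (0:ℝ) ≤ ‖A‖ := norm_nonneg _
    have h3 : (0:ℝ) ≤ ‖c‖ := norm_nonneg _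
    have h4 : (0:ℝ) ≤ ‖t‖ := norm_nonneg _
    calc ‖A t + c‖ ≤ ‖A‖ * ‖t‖ + ‖c‖ := h1
      _ ≤ (‖A‖ + ‖c‖) * (1 + ‖t‖) ^ 1 := by nlinarith

lemma schwartz_bound' (f : 𝓢(ℝ × ℝ, ℂ)) : ∃ C : ℝ, 0 ≤ C ∧ ∀ z, ‖f z‖ ≤ C := by
  obtain ⟨C, hC⟩ := f.decay 0 0
  exact ⟨C, le_of_lt hC.1, fun z => by simpa using hC.2 z⟩

lemma htg_slice2 (x : ℝ) : Function.HasTemperateGrowth (fun q : ℝ => ((x, q) : ℝ × ℝ)) := by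
  have h : (fun q : ℝ => ((x, q) : ℝ × ℝ))
      = fun q : ℝ => (ContinuousLinearMap.inr ℝ ℝ ℝ) q + (x, (0 : ℝ)) := by
    funext q; simp [Prod.ext_iff]
  rw [h]; exact htg_affine _ _

def sliceX (x : ℝ) : 𝓢(ℝ × ℝ, ℂ) →L[ℝ] 𝓢(ℝ, ℂ) :=
  SchwartzMap.compCLM ℝ (htg_slice2 x)
    ⟨1, 1, fun q => by
      have h1 : ‖q‖ ≤ ‖((x, q) : ℝ × ℝ)‖ := norm_snd_le ((x, q) : ℝ × ℝ)
      have h2 : (0:ℝ) ≤ ‖((x, q) : ℝ × ℝ)‖ := norm_nonneg _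
      calc ‖q‖ ≤ ‖((x, q) : ℝ × ℝ)‖ := h1
        _ ≤ 1 * (1 + ‖((x, q) : ℝ × ℝ)‖) ^ 1 := by nlinarith⟩

lemma potAll (v : ℝ → ℂ) (hvi : Integrable v (volume : Measure ℝ)) (hvc : Continuous v)
    (hvconj : ∀ p, (starRingEnd ℂ) (v p) = v p) (hveven : ∀ p, v (-p) = v p)
    (f g : 𝓢(ℝ × ℝ, ℂ)) (x : ℝ) :
    ((∫ p : ℝ, (starRingEnd ℂ) (g (x, p)) * ∫ p' : ℝ, v p' * f (x, p - p'))
      = ∫ p : ℝ, (starRingEnd ℂ) (∫ p' : ℝ, v p' * g (x, p - p')) * f (x, p))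
    ∧ Integrable (fun p : ℝ => (starRingEnd ℂ) (g (x, p)) * ∫ p' : ℝ, v p' * f (x, p - p'))
        (volume : Measure ℝ)
    ∧ Integrable (fun p : ℝ => (starRingEnd ℂ) (∫ p' : ℝ, v p' * g (x, p - p')) * f (x, p))
        (volume : Measure ℝ) := by
  obtain ⟨Cf, hCf0, hCf⟩ := schwartz_bound' f
  obtain ⟨Cg, hCg0, hCg⟩ := schwartz_bound' g
  have hFint : Integrable (fun p : ℝ => f (x, p)) (volume : Measure ℝ) := (sliceX x f).integrable
  have hGint : Integrable (fun p : ℝ => g (x, p)) (volume : Measure ℝ) := (sliceX x g).integrable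
  -- continuity helpers
  have cgx : Continuous fun p : ℝ => g (x, p) := g.continuous.comp (Continuous.prodMk_right x)
  have cfx : Continuous fun p : ℝ => f (x, p) := f.continuous.comp (Continuous.prodMk_right x)
  -- joint integrability J1
  have J1 : Integrable (fun z : ℝ × ℝ => (starRingEnd ℂ) (g (x, z.1)) * (v z.2 * f (x, z.1 - z.2)))
      ((volume : Measure ℝ).prod (volume : Measure ℝ)) := by
    have hdom : Integrable (fun z : ℝ × ℝ => ‖g (x, z.1)‖ * (Cf * ‖v z.2‖))
        ((volume : Measure ℝ).prod (volume : Measure ℝ)) :=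
      (hGint.norm).mul_prod ((hvi.norm).const_mul Cf)
    have hmeas : AEStronglyMeasurable
        (fun z : ℝ × ℝ => (starRingEnd ℂ) (g (x, z.1)) * (v z.2 * f (x, z.1 - z.2)))
        ((volume : Measure ℝ).prod (volume : Measure ℝ)) := by
      have c1 : Continuous fun z : ℝ × ℝ => (starRingEnd ℂ) (g (x, z.1)) :=
        Complex.continuous_conj.comp (cgx.comp continuous_fst)
      have c2 : Continuous fun z : ℝ × ℝ => v z.2 := hvc.comp continuous_snd
      have c3 : Continuous fun z : ℝ × ℝ => f (x, z.1 - z.2) :=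
        cfx.comp (continuous_fst.sub continuous_snd)
      exact (c1.mul (c2.mul c3)).aestronglyMeasurable
    refine hdom.mono' hmeas (Filter.Eventually.of_forall fun z => ?_)
    rw [norm_mul, norm_mul, RCLike.norm_conj]
    calc ‖g (x, z.1)‖ * (‖v z.2‖ * ‖f (x, z.1 - z.2)‖)
        ≤ ‖g (x, z.1)‖ * (‖v z.2‖ * Cf) := by gcongr; exact hCf _
      _ = ‖g (x, z.1)‖ * (Cf * ‖v z.2‖) := by ring
  -- joint integrability J3 (variables (p', p))
  have J3 : Integrable (fun z : ℝ × ℝ => (starRingEnd ℂ) (g (x, z.2 - z.1)) * (v z.1 * f (x, z.2)))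
      ((volume : Measure ℝ).prod (volume : Measure ℝ)) := by
    have hdom : Integrable (fun z : ℝ × ℝ => (Cg * ‖v z.1‖) * ‖f (x, z.2)‖)
        ((volume : Measure ℝ).prod (volume : Measure ℝ)) :=
      ((hvi.norm).const_mul Cg).mul_prod (hFint.norm)
    have hmeas : AEStronglyMeasurable
        (fun z : ℝ × ℝ => (starRingEnd ℂ) (g (x, z.2 - z.1)) * (v z.1 * f (x, z.2)))
        ((volume : Measure ℝ).prod (volume : Measure ℝ)) := by
      have c1 : Continuous fun z : ℝ × ℝ => (starRingEnd ℂ) (g (x, z.2 - z.1)) :=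
        Complex.continuous_conj.comp (cgx.comp (continuous_snd.sub continuous_fst))
      have c2 : Continuous fun z : ℝ × ℝ => v z.1 := hvc.comp continuous_fst
      have c3 : Continuous fun z : ℝ × ℝ => f (x, z.2) := cfx.comp continuous_snd
      exact (c1.mul (c2.mul c3)).aestronglyMeasurable
    refine hdom.mono' hmeas (Filter.Eventually.of_forall fun z => ?_)
    rw [norm_mul, norm_mul, RCLike.norm_conj]
    calc ‖g (x, z.2 - z.1)‖ * (‖v z.1‖ * ‖f (x, z.2)‖)
        ≤ Cg * (‖v z.1‖ * ‖f (x, z.2)‖) := by gcongr; exact hCg _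
      _ = (Cg * ‖v z.1‖) * ‖f (x, z.2)‖ := by ring
  -- pointwise key identity
  have keyC : ∀ p : ℝ, (∫ p' : ℝ, (starRingEnd ℂ) (g (x, p - p')) * (v p' * f (x, p)))
      = (starRingEnd ℂ) (∫ p' : ℝ, v p' * g (x, p - p')) * f (x, p) := by
    intro p
    have h1 : (starRingEnd ℂ) (∫ p' : ℝ, v p' * g (x, p - p'))
        = ∫ p' : ℝ, v p' * (starRingEnd ℂ) (g (x, p - p')) := by
      rw [← integral_conj]
      refine integral_congr_ae (Filter.Eventually.of_forall fun p' => ?_)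
      show (starRingEnd ℂ) (v p' * g (x, p - p')) = v p' * (starRingEnd ℂ) (g (x, p - p'))
      rw [map_mul, hvconj p']
    rw [h1, ← integral_mul_const]
    refine integral_congr_ae (Filter.Eventually.of_forall fun p' => ?_)
    ring
  refine ⟨?_, ?_, ?_⟩
  · -- main equality
    calc (∫ p : ℝ, (starRingEnd ℂ) (g (x, p)) * ∫ p' : ℝ, v p' * f (x, p - p'))
        = ∫ p : ℝ, ∫ p' : ℝ, (starRingEnd ℂ) (g (x, p)) * (v p' * f (x, p - p')) := by
          refine integral_congr_ae (Filter.Eventually.of_forall fun p => ?_)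
          exact (integral_const_mul _ _).symm
      _ = ∫ p' : ℝ, ∫ p : ℝ, (starRingEnd ℂ) (g (x, p)) * (v p' * f (x, p - p')) :=
          integral_integral_swap J1
      _ = ∫ p' : ℝ, ∫ p : ℝ, (starRingEnd ℂ) (g (x, p + p')) * (v p' * f (x, p)) := by
          refine integral_congr_ae (Filter.Eventually.of_forall fun p' => ?_)
          show (∫ p : ℝ, (starRingEnd ℂ) (g (x, p)) * (v p' * f (x, p - p')))
              = ∫ p : ℝ, (starRingEnd ℂ) (g (x, p + p')) * (v p' * f (x, p))
          rw [← MeasureTheory.integral_add_right_eq_self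
            (fun p => (starRingEnd ℂ) (g (x, p)) * (v p' * f (x, p - p'))) p']
          simp only [add_sub_cancel_right]
      _ = ∫ p' : ℝ, ∫ p : ℝ, (starRingEnd ℂ) (g (x, p - p')) * (v p' * f (x, p)) := by
          rw [← integral_neg_eq_self
            (fun p' : ℝ => ∫ p : ℝ, (starRingEnd ℂ) (g (x, p + p')) * (v p' * f (x, p))) volume]
          refine integral_congr_ae (Filter.Eventually.of_forall fun p' => ?_)
          show (∫ p : ℝ, (starRingEnd ℂ) (g (x, p + -p')) * (v (-p') * f (x, p))) = _
          rw [hveven p']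
          simp only [← sub_eq_add_neg]
      _ = ∫ p : ℝ, ∫ p' : ℝ, (starRingEnd ℂ) (g (x, p - p')) * (v p' * f (x, p)) :=
          integral_integral_swap J3
      _ = ∫ p : ℝ, (starRingEnd ℂ) (∫ p' : ℝ, v p' * g (x, p - p')) * f (x, p) :=
          integral_congr_ae (Filter.Eventually.of_forall fun p => keyC p)
  · have h := J1.integral_prod_left
    refine h.congr (Filter.Eventually.of_forall fun p => ?_)
    show (∫ p' : ℝ, (starRingEnd ℂ) (g (x, p)) * (v p' * f (x, p - p')))
        = (starRingEnd ℂ) (g (x, p)) * ∫ p' : ℝ, v p' * f (x, p - p')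
    exact integral_const_mul _ _
  · have h := J3.integral_prod_right
    refine h.congr (Filter.Eventually.of_forall fun p => keyC p)

end WignerAux5

end

open MeasureTheory Complex

/-- the Wigner Hamiltonian H_w is symmetric on Schwartz functions:
∬ conj(g) H_w f = ∬ conj(H_w g) f. -/
theorem wigner_hamiltonian_symmetric
    (V : SchwartzMap ℝ ℝ)
    (Veig : ℝ → ℝ → ℂ)
    (hVeig : ∀ x p, Veig x p =
      (1 / (2 * Real.pi)) *
        ∫ y : ℝ, ((V (x + y / 2) + V (x - y / 2) : ℝ) : ℂ) *
          Complex.exp (-(Complex.I * p * y)))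
    (f g : SchwartzMap (ℝ × ℝ) ℂ)
    (Hwf Hwg : ℝ → ℝ → ℂ)
    (hHwf : ∀ x p, Hwf x p =
      (1 / 2 : ℂ) * (-(1 / 4 : ℂ) * iteratedDeriv 2 (fun t => f (t, p)) x
        + (p ^ 2 : ℝ) * f (x, p)
        + ∫ p' : ℝ, Veig x p' * f (x, p - p')))
    (hHwg : ∀ x p, Hwg x p =
      (1 / 2 : ℂ) * (-(1 / 4 : ℂ) * iteratedDeriv 2 (fun t => g (t, p)) x
        + (p ^ 2 : ℝ) * g (x, p)
        + ∫ p' : ℝ, Veig x p' * g (x, p - p'))) :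
    ∫ x : ℝ, ∫ p : ℝ, (starRingEnd ℂ) (g (x, p)) * Hwf x p =
      ∫ x : ℝ, ∫ p : ℝ, (starRingEnd ℂ) (Hwg x p) * f (x, p) := by
  classical
  -- second x-derivative operators
  set Df := LineDeriv.lineDerivOpCLM ℝ 𝓢(ℝ × ℝ, ℂ) ((1:ℝ), (0:ℝ)) (LineDeriv.lineDerivOpCLM ℝ 𝓢(ℝ × ℝ, ℂ) ((1:ℝ), (0:ℝ)) f)
    with hDf_def
  set Dg := LineDeriv.lineDerivOpCLM ℝ 𝓢(ℝ × ℝ, ℂ) ((1:ℝ), (0:ℝ)) (LineDeriv.lineDerivOpCLM ℝ 𝓢(ℝ × ℝ, ℂ) ((1:ℝ), (0:ℝ)) g)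
    with hDg_def
  obtain ⟨Cf, hCf0, hCf⟩ := WignerAux3.schwartz_bound' f
  obtain ⟨Cg, hCg0, hCg⟩ := WignerAux3.schwartz_bound' g
  obtain ⟨CDg, hCDg0, hCDg⟩ := WignerAux3.schwartz_bound' Dg
  -- Veig facts
  have hvi : ∀ x : ℝ, Integrable (Veig x) (volume : Measure ℝ) :=
    fun x => WignerAux4.veig_int V Veig hVeig x
  have hvc : ∀ x : ℝ, Continuous (Veig x) := fun x => WignerAux4.veig_cont V Veig hVeig x
  have hvconj : ∀ x p : ℝ, (starRingEnd ℂ) (Veig x p) = Veig x p :=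
    fun x p => WignerAux4.veig_conj V Veig hVeig x p
  have hveven : ∀ x p : ℝ, Veig x (-p) = Veig x p :=
    fun x p => WignerAux4.veig_even V Veig hVeig x p
  have hpot : ∀ x : ℝ,
      ((∫ p : ℝ, (starRingEnd ℂ) (g (x, p)) * ∫ p' : ℝ, Veig x p' * f (x, p - p'))
        = ∫ p : ℝ, (starRingEnd ℂ) (∫ p' : ℝ, Veig x p' * g (x, p - p')) * f (x, p))
      ∧ Integrable (fun p : ℝ => (starRingEnd ℂ) (g (x, p))
            * ∫ p' : ℝ, Veig x p' * f (x, p - p')) (volume : Measure ℝ)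
      ∧ Integrable (fun p : ℝ => (starRingEnd ℂ) (∫ p' : ℝ, Veig x p' * g (x, p - p'))
            * f (x, p)) (volume : Measure ℝ) :=
    fun x => WignerAux5.potAll (Veig x) (hvi x) (hvc x) (hvconj x) (hveven x) f g x
  -- per-x slice continuity
  have cgx : ∀ x : ℝ, Continuous fun p : ℝ => g (x, p) :=
    fun x => g.continuous.comp (Continuous.prodMk_right x)
  have cfx : ∀ x : ℝ, Continuous fun p : ℝ => f (x, p) :=
    fun x => f.continuous.comp (Continuous.prodMk_right x)
  have cDgx : ∀ x : ℝ, Continuous fun p : ℝ => Dg (x, p) :=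
    fun x => Dg.continuous.comp (Continuous.prodMk_right x)
  -- per-x integrability of the three pieces, LHS version
  have hA0 : ∀ x : ℝ, Integrable (fun p : ℝ => (starRingEnd ℂ) (g (x, p)) * Df (x, p))
      (volume : Measure ℝ) := by
    intro x
    exact (WignerAux.sliceX x Df).integrable.bdd_mul
      ((Complex.continuous_conj.comp (cgx x)).aestronglyMeasurable)
      (Filter.Eventually.of_forall fun p => by simpa using hCg (x, p))
  have hB0 : ∀ x : ℝ, Integrable
      (fun p : ℝ => (starRingEnd ℂ) (g (x, p)) * (((p ^ 2 : ℝ) : ℂ) * f (x, p)))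
      (volume : Measure ℝ) := by
    intro x
    have hpow : Integrable (fun p : ℝ => ‖p‖ ^ 2 * ‖(WignerAux.sliceX x f) p‖)
        (volume : Measure ℝ) := (WignerAux.sliceX x f).integrable_pow_mul (volume : Measure ℝ) 2
    have hcore : Integrable (fun p : ℝ => ((p ^ 2 : ℝ) : ℂ) * f (x, p)) (volume : Measure ℝ) := by
      refine hpow.mono' ?_ (Filter.Eventually.of_forall fun p => ?_)
      · exact ((Complex.continuous_ofReal.comp (continuous_pow 2)).mul (cfx x)).aestronglyMeasurable
      · rw [norm_mul, Complex.norm_real, norm_pow]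
        exact le_of_eq rfl
    exact hcore.bdd_mul ((Complex.continuous_conj.comp (cgx x)).aestronglyMeasurable)
      (Filter.Eventually.of_forall fun p => by simpa using hCg (x, p))
  -- per-x integrability, RHS version
  have hA0' : ∀ x : ℝ, Integrable (fun p : ℝ => (starRingEnd ℂ) (Dg (x, p)) * f (x, p))
      (volume : Measure ℝ) := by
    intro x
    exact (WignerAux.sliceX x f).integrable.bdd_mul
      ((Complex.continuous_conj.comp (cDgx x)).aestronglyMeasurable)
      (Filter.Eventually.of_forall fun p => by simpa using hCDg (x, p))
  -- pointwise inner-integral identities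
  have hL : ∀ x : ℝ, (∫ p : ℝ, (starRingEnd ℂ) (g (x, p)) * Hwf x p)
      = (-(1/8) : ℂ) * (∫ p : ℝ, (starRingEnd ℂ) (g (x, p)) * Df (x, p))
        + ((1/2 : ℂ) * (∫ p : ℝ, (starRingEnd ℂ) (g (x, p)) * (((p ^ 2 : ℝ) : ℂ) * f (x, p)))
          + (1/2 : ℂ) * (∫ p : ℝ, (starRingEnd ℂ) (g (x, p))
              * ∫ p' : ℝ, Veig x p' * f (x, p - p'))) := by
    intro x
    have e1 : (∫ p : ℝ, (starRingEnd ℂ) (g (x, p)) * Hwf x p)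
        = ∫ p : ℝ, ((-(1/8) : ℂ) * ((starRingEnd ℂ) (g (x, p)) * Df (x, p))
          + ((1/2 : ℂ) * ((starRingEnd ℂ) (g (x, p)) * (((p ^ 2 : ℝ) : ℂ) * f (x, p)))
            + (1/2 : ℂ) * ((starRingEnd ℂ) (g (x, p))
                * ∫ p' : ℝ, Veig x p' * f (x, p - p')))) := by
      refine integral_congr_ae (Filter.Eventually.of_forall fun p => ?_)
      show (starRingEnd ℂ) (g (x, p)) * Hwf x p = _
      rw [hHwf x p, WignerAux2.slice_iter2 f x p, ← hDf_def]
      ring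
    have h1 := (hA0 x).const_mul (-(1/8) : ℂ)
    have h2 := (hB0 x).const_mul ((1/2) : ℂ)
    have h3 := ((hpot x).2.1).const_mul ((1/2) : ℂ)
    have e2 : (∫ p : ℝ, ((-(1/8) : ℂ) * ((starRingEnd ℂ) (g (x, p)) * Df (x, p))
          + ((1/2 : ℂ) * ((starRingEnd ℂ) (g (x, p)) * (((p ^ 2 : ℝ) : ℂ) * f (x, p)))
            + (1/2 : ℂ) * ((starRingEnd ℂ) (g (x, p))
                * ∫ p' : ℝ, Veig x p' * f (x, p - p')))))
        = (∫ p : ℝ, (-(1/8) : ℂ) * ((starRingEnd ℂ) (g (x, p)) * Df (x, p)))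
          + ∫ p : ℝ, ((1/2 : ℂ) * ((starRingEnd ℂ) (g (x, p)) * (((p ^ 2 : ℝ) : ℂ) * f (x, p)))
            + (1/2 : ℂ) * ((starRingEnd ℂ) (g (x, p))
                * ∫ p' : ℝ, Veig x p' * f (x, p - p'))) := integral_add h1 (h2.add h3)
    have e3 : (∫ p : ℝ, ((1/2 : ℂ) * ((starRingEnd ℂ) (g (x, p)) * (((p ^ 2 : ℝ) : ℂ) * f (x, p)))
            + (1/2 : ℂ) * ((starRingEnd ℂ) (g (x, p))
                * ∫ p' : ℝ, Veig x p' * f (x, p - p'))))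
        = (∫ p : ℝ, (1/2 : ℂ) * ((starRingEnd ℂ) (g (x, p)) * (((p ^ 2 : ℝ) : ℂ) * f (x, p))))
          + ∫ p : ℝ, (1/2 : ℂ) * ((starRingEnd ℂ) (g (x, p))
              * ∫ p' : ℝ, Veig x p' * f (x, p - p')) := integral_add h2 h3
    have e4 : (∫ p : ℝ, (-(1/8) : ℂ) * ((starRingEnd ℂ) (g (x, p)) * Df (x, p)))
        = (-(1/8) : ℂ) * ∫ p : ℝ, (starRingEnd ℂ) (g (x, p)) * Df (x, p) :=
      integral_const_mul _ _
    have e5 : (∫ p : ℝ, (1/2 : ℂ) * ((starRingEnd ℂ) (g (x, p)) * (((p ^ 2 : ℝ) : ℂ) * f (x, p))))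
        = (1/2 : ℂ) * ∫ p : ℝ, (starRingEnd ℂ) (g (x, p)) * (((p ^ 2 : ℝ) : ℂ) * f (x, p)) :=
      integral_const_mul _ _
    have e6 : (∫ p : ℝ, (1/2 : ℂ) * ((starRingEnd ℂ) (g (x, p))
          * ∫ p' : ℝ, Veig x p' * f (x, p - p')))
        = (1/2 : ℂ) * ∫ p : ℝ, (starRingEnd ℂ) (g (x, p))
            * ∫ p' : ℝ, Veig x p' * f (x, p - p') := integral_const_mul _ _
    rw [e1, e2, e3, e4, e5, e6]
  have hR : ∀ x : ℝ, (∫ p : ℝ, (starRingEnd ℂ) (Hwg x p) * f (x, p))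
      = (-(1/8) : ℂ) * (∫ p : ℝ, (starRingEnd ℂ) (Dg (x, p)) * f (x, p))
        + ((1/2 : ℂ) * (∫ p : ℝ, (starRingEnd ℂ) (g (x, p)) * (((p ^ 2 : ℝ) : ℂ) * f (x, p)))
          + (1/2 : ℂ) * (∫ p : ℝ, (starRingEnd ℂ) (g (x, p))
              * ∫ p' : ℝ, Veig x p' * f (x, p - p'))) := by
    intro x
    have e1 : (∫ p : ℝ, (starRingEnd ℂ) (Hwg x p) * f (x, p))
        = ∫ p : ℝ, ((-(1/8) : ℂ) * ((starRingEnd ℂ) (Dg (x, p)) * f (x, p))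
          + ((1/2 : ℂ) * ((starRingEnd ℂ) (g (x, p)) * (((p ^ 2 : ℝ) : ℂ) * f (x, p)))
            + (1/2 : ℂ) * ((starRingEnd ℂ) (∫ p' : ℝ, Veig x p' * g (x, p - p'))
                * f (x, p)))) := by
      refine integral_congr_ae (Filter.Eventually.of_forall fun p => ?_)
      show (starRingEnd ℂ) (Hwg x p) * f (x, p) = _
      rw [hHwg x p, WignerAux2.slice_iter2 g x p, ← hDg_def]
      simp only [map_mul, map_add, map_neg, map_div₀, map_one, map_ofNat, Complex.conj_ofReal]
      ring
    have h1 := (hA0' x).const_mul (-(1/8) : ℂ)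
    have h2 := (hB0 x).const_mul ((1/2) : ℂ)
    have h3 := ((hpot x).2.2).const_mul ((1/2) : ℂ)
    have e2 : (∫ p : ℝ, ((-(1/8) : ℂ) * ((starRingEnd ℂ) (Dg (x, p)) * f (x, p))
          + ((1/2 : ℂ) * ((starRingEnd ℂ) (g (x, p)) * (((p ^ 2 : ℝ) : ℂ) * f (x, p)))
            + (1/2 : ℂ) * ((starRingEnd ℂ) (∫ p' : ℝ, Veig x p' * g (x, p - p'))
                * f (x, p)))))
        = (∫ p : ℝ, (-(1/8) : ℂ) * ((starRingEnd ℂ) (Dg (x, p)) * f (x, p)))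
          + ∫ p : ℝ, ((1/2 : ℂ) * ((starRingEnd ℂ) (g (x, p)) * (((p ^ 2 : ℝ) : ℂ) * f (x, p)))
            + (1/2 : ℂ) * ((starRingEnd ℂ) (∫ p' : ℝ, Veig x p' * g (x, p - p'))
                * f (x, p))) := integral_add h1 (h2.add h3)
    have e3 : (∫ p : ℝ, ((1/2 : ℂ) * ((starRingEnd ℂ) (g (x, p)) * (((p ^ 2 : ℝ) : ℂ) * f (x, p)))
            + (1/2 : ℂ) * ((starRingEnd ℂ) (∫ p' : ℝ, Veig x p' * g (x, p - p'))
                * f (x, p))))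
        = (∫ p : ℝ, (1/2 : ℂ) * ((starRingEnd ℂ) (g (x, p)) * (((p ^ 2 : ℝ) : ℂ) * f (x, p))))
          + ∫ p : ℝ, (1/2 : ℂ) * ((starRingEnd ℂ) (∫ p' : ℝ, Veig x p' * g (x, p - p'))
              * f (x, p)) := integral_add h2 h3
    have e4 : (∫ p : ℝ, (-(1/8) : ℂ) * ((starRingEnd ℂ) (Dg (x, p)) * f (x, p)))
        = (-(1/8) : ℂ) * ∫ p : ℝ, (starRingEnd ℂ) (Dg (x, p)) * f (x, p) :=
      integral_const_mul _ _
    have e5 : (∫ p : ℝ, (1/2 : ℂ) * ((starRingEnd ℂ) (g (x, p)) * (((p ^ 2 : ℝ) : ℂ) * f (x, p))))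
        = (1/2 : ℂ) * ∫ p : ℝ, (starRingEnd ℂ) (g (x, p)) * (((p ^ 2 : ℝ) : ℂ) * f (x, p)) :=
      integral_const_mul _ _
    have e6 : (∫ p : ℝ, (1/2 : ℂ) * ((starRingEnd ℂ) (∫ p' : ℝ, Veig x p' * g (x, p - p'))
          * f (x, p)))
        = (1/2 : ℂ) * ∫ p : ℝ, (starRingEnd ℂ) (∫ p' : ℝ, Veig x p' * g (x, p - p'))
            * f (x, p) := integral_const_mul _ _
    rw [e1, e2, e3, e4, e5, e6, ← (hpot x).1]
  -- marginal integrability of the kinetic inner integrals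
  have intP1 : Integrable (fun x : ℝ => ∫ p : ℝ, (starRingEnd ℂ) (g (x, p)) * Df (x, p))
      (volume : Measure ℝ) := (WignerAux3.joint_int g Df).integral_prod_left
  have intP2 : Integrable (fun x : ℝ => ∫ p : ℝ, (starRingEnd ℂ) (Dg (x, p)) * f (x, p))
      (volume : Measure ℝ) := (WignerAux3.joint_int Dg f).integral_prod_left
  -- kinetic symmetry
  have hkin : (∫ x : ℝ, ∫ p : ℝ, (starRingEnd ℂ) (g (x, p)) * Df (x, p))
      = ∫ x : ℝ, ∫ p : ℝ, (starRingEnd ℂ) (Dg (x, p)) * f (x, p) := WignerAux3.kinetic f g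
  -- abbreviations
  set P1 : ℝ → ℂ := fun x => ∫ p : ℝ, (starRingEnd ℂ) (g (x, p)) * Df (x, p) with hP1
  set P2 : ℝ → ℂ := fun x => ∫ p : ℝ, (starRingEnd ℂ) (Dg (x, p)) * f (x, p) with hP2
  set S : ℝ → ℂ := fun x =>
    (1/2 : ℂ) * (∫ p : ℝ, (starRingEnd ℂ) (g (x, p)) * (((p ^ 2 : ℝ) : ℂ) * f (x, p)))
      + (1/2 : ℂ) * (∫ p : ℝ, (starRingEnd ℂ) (g (x, p))
          * ∫ p' : ℝ, Veig x p' * f (x, p - p')) with hS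
  have hX : Integrable (fun x : ℝ => (-(1/8) : ℂ) * (P1 x - P2 x)) (volume : Measure ℝ) :=
    (intP1.sub intP2).const_mul _
  have hX0 : (∫ x : ℝ, (-(1/8) : ℂ) * (P1 x - P2 x)) = 0 := by
    rw [integral_const_mul, integral_sub intP1 intP2]
    rw [hP1, hP2]
    rw [show (∫ x : ℝ, ∫ p : ℝ, (starRingEnd ℂ) (g (x, p)) * Df (x, p))
        = ∫ x : ℝ, ∫ p : ℝ, (starRingEnd ℂ) (Dg (x, p)) * f (x, p) from hkin]
    simp
  have key : (∫ x : ℝ, ((-(1/8) : ℂ) * (P1 x - P2 x) + ((-(1/8) : ℂ) * P2 x + S x)))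
      = ∫ x : ℝ, ((-(1/8) : ℂ) * P2 x + S x) := by
    by_cases hRint : Integrable (fun x : ℝ => (-(1/8) : ℂ) * P2 x + S x) (volume : Measure ℝ)
    · rw [integral_add hX hRint, hX0, zero_add]
    · rw [integral_undef hRint, integral_undef]
      intro habs
      refine hRint ((habs.sub hX).congr (Filter.Eventually.of_forall fun x => ?_))
      simp
  calc (∫ x : ℝ, ∫ p : ℝ, (starRingEnd ℂ) (g (x, p)) * Hwf x p)
      = ∫ x : ℝ, ((-(1/8) : ℂ) * (P1 x - P2 x) + ((-(1/8) : ℂ) * P2 x + S x)) := by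
        refine integral_congr_ae (Filter.Eventually.of_forall fun x => ?_)
        show (∫ p : ℝ, (starRingEnd ℂ) (g (x, p)) * Hwf x p) = _
        rw [hL x, hP1, hP2, hS]
        ring
    _ = ∫ x : ℝ, ((-(1/8) : ℂ) * P2 x + S x) := key
    _ = ∫ x : ℝ, ∫ p : ℝ, (starRingEnd ℂ) (Hwg x p) * f (x, p) := by
        refine integral_congr_ae (Filter.Eventually.of_forall fun x => ?_)
        show _ = (∫ p : ℝ, (starRingEnd ℂ) (Hwg x p) * f (x, p))
        rw [hR x, hP2, hS]
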